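/- arXiv:2112.13394 — 3 statements merged into one kernel-verified Lean document; each statement's English description precedes it below -/
import Mathlib

section
/- Let ω be a bounded open connected subset of ℝ² whose closure is compact, and let θ : ℝ² → ℝ³ be of class C² on an open set containing the closure of ω and an immersion. Define Θ(y, x_3) := θ(y) + x_3 a_3(y), where a_3 := (a_1 × a_2)/|a_1 × a_2| and a_α := ∂_αθ. Then there exists ε_0 > 0 such that for every y in the closure of ω and every x_3 ∈ [−ε_0, ε_0], the three vectors g_1(y,x_3) := a_1(y) + x_3 ∂_1 a_3(y), g_2(y,x_3) := a_2(y) + x_3 ∂_2 a_3(y) and g_3(y,x_3) := a_3(y) are linearly independent; equivalently, Θ is an immersion on (closure ω) × [−ε_0, ε_0] and the determinant of the Gram matrix (g_i · g_j) is strictly positive there. -/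
open scoped RealInnerProductSpace

noncomputable section

abbrev E2 : Type := EuclideanSpace ℝ (Fin 2)
abbrev E3 : Type := EuclideanSpace ℝ (Fin 3)

/-- Partial derivative `∂_α f` of an `ℝ³`-valued map on `ℝ²`. -/
def pd (α : Fin 2) (f : E2 → E3) (y : E2) : E3 :=
  fderiv ℝ f y (EuclideanSpace.single α 1)

/-- Partial derivative `∂_α f` of a scalar map on `ℝ²`. -/
def pds (α : Fin 2) (f : E2 → ℝ) (y : E2) : ℝ :=
  fderiv ℝ f y (EuclideanSpace.single α 1)

/-- Cross product in `ℝ³`. -/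
def cross3 (u v : E3) : E3 :=
  (WithLp.equiv 2 (Fin 3 → ℝ)).symm
    ![u 1 * v 2 - u 2 * v 1, u 2 * v 0 - u 0 * v 2, u 0 * v 1 - u 1 * v 0]

/-- The unit normal vector `a₃(y) = (a₁ × a₂)/|a₁ × a₂|` of the surface parametrized by `θ`. -/
def nvec (θ : E2 → E3) (y : E2) : E3 :=
  ‖cross3 (pd 0 θ y) (pd 1 θ y)‖⁻¹ • cross3 (pd 0 θ y) (pd 1 θ y)

lemma gram_det_ne_zero_iff {E : Type*} [NormedAddCommGroup E] [InnerProductSpace ℝ E]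
    {n : ℕ} (v : Fin n → E) :
    (Matrix.of fun i j => ⟪v i, v j⟫).det ≠ 0 ↔ LinearIndependent ℝ v := by
  rw [← not_iff_not, not_ne_iff, ← Matrix.exists_mulVec_eq_zero_iff]
  rw [iff_comm]
  constructor
  · intro hdep
    rw [Fintype.not_linearIndependent_iff] at hdep
    obtain ⟨g, hg, i, hi⟩ := hdep
    refine ⟨g, fun h => hi (by simp [h]), ?_⟩
    funext i
    simp only [Matrix.mulVec, dotProduct, Matrix.of_apply]
    calc ∑ j, ⟪v i, v j⟫ * g j = ⟪v i, ∑ j, g j • v j⟫ := by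
          rw [inner_sum]; congr 1; funext j; rw [real_inner_smul_right]; ring
      _ = 0 := by rw [hg, inner_zero_right]
  · rintro ⟨g, hg, hmul⟩
    rw [Fintype.not_linearIndependent_iff]
    refine ⟨g, ?_, ?_⟩
    · have h0 : ⟪∑ i, g i • v i, ∑ j, g j • v j⟫ = 0 := by
        rw [sum_inner]
        have : ∀ i, ⟪g i • v i, ∑ j, g j • v j⟫
            = g i * ((Matrix.of fun i j => ⟪v i, v j⟫).mulVec g i) := by
          intro i
          rw [real_inner_smul_left]
          simp only [Matrix.mulVec, dotProduct, Matrix.of_apply, inner_sum]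
          congr 1
          congr 1; funext j; rw [real_inner_smul_right]; ring
        simp only [this, hmul]
        simp
      exact inner_self_eq_zero.mp h0
    · obtain ⟨i, hi⟩ := Function.ne_iff.mp hg
      exact ⟨i, hi⟩

lemma inner_cross3_left (u v : E3) : ⟪u, cross3 u v⟫ = 0 := by
  simp [cross3, PiLp.inner_apply, RCLike.inner_apply, Fin.sum_univ_three,
    WithLp.equiv_symm_apply, PiLp.toLp_apply]
  ring

lemma inner_cross3_right (u v : E3) : ⟪v, cross3 u v⟫ = 0 := by
  simp [cross3, PiLp.inner_apply, RCLike.inner_apply, Fin.sum_univ_three,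
    WithLp.equiv_symm_apply, PiLp.toLp_apply]
  ring

lemma lagrange3 (u v : E3) :
    ⟪u,u⟫ * ⟪v,v⟫ - ⟪u,v⟫ * ⟪v,u⟫ = ⟪cross3 u v, cross3 u v⟫ := by
  simp [cross3, PiLp.inner_apply, RCLike.inner_apply, Fin.sum_univ_three,
    WithLp.equiv_symm_apply, PiLp.toLp_apply, EuclideanSpace.real_norm_sq_eq]
  ring

lemma contDiff_cross3 : ContDiff ℝ 1 (fun p : E3 × E3 => cross3 p.1 p.2) := by
  have hcomp : ∀ j : Fin 3, ContDiff ℝ 1 (fun x : E3 => x j) := fun j =>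
    contDiff_euclidean.mp contDiff_id j
  rw [contDiff_euclidean]
  intro i
  have h1 : ∀ j : Fin 3, ContDiff ℝ 1 (fun p : E3 × E3 => p.1 j) := fun j =>
    (hcomp j).comp contDiff_fst
  have h2 : ∀ j : Fin 3, ContDiff ℝ 1 (fun p : E3 × E3 => p.2 j) := fun j =>
    (hcomp j).comp contDiff_snd
  fin_cases i <;>
    simp only [cross3, WithLp.equiv_symm_apply, PiLp.toLp_apply, Matrix.cons_val_zero, Matrix.cons_val_one,
      Matrix.head_cons, Matrix.cons_val_two, Matrix.tail_cons] <;>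
    exact ((h1 _).mul (h2 _)).sub ((h1 _).mul (h2 _))

/-- for a `C²` immersion `θ` on a neighborhood of the compact closure of the
bounded domain `ω`, there exists `ε₀ > 0` such that for every `y` in the closure of `ω` and
every `x₃ ∈ [−ε₀, ε₀]`, the vectors `gᵢ(y, x₃)` given by `g_α = a_α + x₃ ∂_α a₃` and
`g₃ = a₃` are linearly independent, and the determinant of their Gram matrix is positive. -/
theorem shell_covariant_basis_linear_independent
    (ω : Set E2) (hω_open : IsOpen ω) (hω_bdd : Bornology.IsBounded ω)
    (hω_conn : IsConnected ω)
    (θ : E2 → E3) (U : Set E2) (hU : IsOpen U) (hclU : closure ω ⊆ U)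
    (hθ : ContDiffOn ℝ 2 θ U)
    (himm : ∀ y ∈ closure ω, LinearIndependent ℝ ![pd 0 θ y, pd 1 θ y]) :
    ∃ ε₀ : ℝ, 0 < ε₀ ∧ ∀ y ∈ closure ω, ∀ x₃ ∈ Set.Icc (-ε₀) ε₀,
      LinearIndependent ℝ
        ![pd 0 θ y + x₃ • pd 0 (nvec θ) y,
          pd 1 θ y + x₃ • pd 1 (nvec θ) y, nvec θ y] ∧
      0 < (Matrix.of fun i j : Fin 3 =>
        ⟪![pd 0 θ y + x₃ • pd 0 (nvec θ) y,
            pd 1 θ y + x₃ • pd 1 (nvec θ) y, nvec θ y] i,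
          ![pd 0 θ y + x₃ • pd 0 (nvec θ) y,
            pd 1 θ y + x₃ • pd 1 (nvec θ) y, nvec θ y] j⟫).det := by
  classical
  set K := closure ω with hKdef
  have hK : IsCompact K := Metric.isCompact_of_isClosed_isBounded isClosed_closure hω_bdd.closure
  -- derivatives of θ are C¹ on U
  have hfd : ContDiffOn ℝ 1 (fderiv ℝ θ) U := hθ.fderiv_of_isOpen hU (by norm_num)
  have hpd : ∀ α : Fin 2, ContDiffOn ℝ 1 (pd α θ) U := by
    intro α
    have h : ContDiffOn ℝ 1
        (⇑(ContinuousLinearMap.apply ℝ E3 (EuclideanSpace.single α 1)) ∘ fderiv ℝ θ) U :=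
      (ContinuousLinearMap.apply ℝ E3 (EuclideanSpace.single α 1)).contDiff.comp_contDiffOn hfd
    exact h
  set c : E2 → E3 := fun y => cross3 (pd 0 θ y) (pd 1 θ y) with hcdef
  have hc : ContDiffOn ℝ 1 c U := by
    have h : ContDiffOn ℝ 1 ((fun p : E3 × E3 => cross3 p.1 p.2) ∘ fun y => (pd 0 θ y, pd 1 θ y)) U :=
      contDiff_cross3.comp_contDiffOn (ContDiffOn.prodMk (hpd 0) (hpd 1))
    exact h
  -- cross product is nonzero on K
  have hcK : ∀ y ∈ K, c y ≠ 0 := by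
    intro y hy
    have hgram2 : (Matrix.of fun i j : Fin 2 =>
        ⟪(![pd 0 θ y, pd 1 θ y]) i, (![pd 0 θ y, pd 1 θ y]) j⟫).det ≠ 0 :=
      (gram_det_ne_zero_iff _).mpr (himm y hy)
    rw [Matrix.det_fin_two] at hgram2
    simp only [Matrix.of_apply, Matrix.cons_val_zero, Matrix.cons_val_one,
      Matrix.head_cons] at hgram2
    rw [lagrange3] at hgram2
    intro h
    apply hgram2
    rw [show cross3 (pd 0 θ y) (pd 1 θ y) = (0 : E3) from h]
    simp
  -- the open set V where c ≠ 0
  set V : Set E2 := U ∩ c ⁻¹' ({0}ᶜ) with hVdef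
  have hVopen : IsOpen V := hc.continuousOn.isOpen_inter_preimage hU isOpen_compl_singleton
  have hKV : K ⊆ V := fun y hy => ⟨hclU hy, hcK y hy⟩
  have hVU : V ⊆ U := Set.inter_subset_left
  have hcV : ∀ y ∈ V, c y ≠ 0 := fun y hy => hy.2
  -- nvec is C¹ on V
  have hn : ContDiffOn ℝ 1 (nvec θ) V := by
    intro y hy
    have hcy : ContDiffAt ℝ 1 c y := (hc y (hVU hy)).contDiffAt (hU.mem_nhds (hVU hy))
    have h0 : c y ≠ 0 := hcV y hy
    have : ContDiffAt ℝ 1 (fun z => ‖c z‖⁻¹ • c z) y :=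
      ((hcy.norm ℝ h0).inv (norm_ne_zero_iff.mpr h0)).smul hcy
    exact this.contDiffWithinAt
  have hfn : ContinuousOn (fderiv ℝ (nvec θ)) V :=
    hn.continuousOn_fderiv_of_isOpen hVopen le_rfl
  have hpdn : ∀ α : Fin 2, ContinuousOn (pd α (nvec θ)) V := by
    intro α
    have h : ContinuousOn
        (⇑(ContinuousLinearMap.apply ℝ E3 (EuclideanSpace.single α 1)) ∘ fderiv ℝ (nvec θ)) V :=
      (ContinuousLinearMap.apply ℝ E3 (EuclideanSpace.single α 1)).continuous.comp_continuousOn hfn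
    exact h
  -- the vectors as functions of (y, t)
  set G : E2 × ℝ → Fin 3 → E3 := fun p =>
    ![pd 0 θ p.1 + p.2 • pd 0 (nvec θ) p.1,
      pd 1 θ p.1 + p.2 • pd 1 (nvec θ) p.1, nvec θ p.1] with hGdef
  set F : E2 × ℝ → ℝ := fun p => (Matrix.of fun i j : Fin 3 => ⟪G p i, G p j⟫).det with hFdef
  set W : Set (E2 × ℝ) := V ×ˢ (Set.univ : Set ℝ) with hWdef
  have hWopen : IsOpen W := hVopen.prod isOpen_univ
  have hfst : ∀ {f : E2 → E3}, ContinuousOn f V → ContinuousOn (fun p : E2 × ℝ => f p.1) W :=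
    fun {f} hf => hf.comp continuousOn_fst (fun p hp => hp.1)
  have hGc : ∀ i, ContinuousOn (fun p => G p i) W := by
    intro i
    fin_cases i
    · exact (hfst ((hpd 0).continuousOn.mono hVU)).add
        (continuousOn_snd.smul (hfst (hpdn 0)))
    · exact (hfst ((hpd 1).continuousOn.mono hVU)).add
        (continuousOn_snd.smul (hfst (hpdn 1)))
    · exact hfst hn.continuousOn
  have hentry : ∀ i j, ContinuousOn (fun p => ⟪G p i, G p j⟫) W := fun i j =>
    (hGc i).inner (hGc j)
  have hFc : ContinuousOn F W := by
    have : F = fun p =>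
        ⟪G p 0, G p 0⟫ * ⟪G p 1, G p 1⟫ * ⟪G p 2, G p 2⟫ -
        ⟪G p 0, G p 0⟫ * ⟪G p 1, G p 2⟫ * ⟪G p 2, G p 1⟫ -
        ⟪G p 0, G p 1⟫ * ⟪G p 1, G p 0⟫ * ⟪G p 2, G p 2⟫ +
        ⟪G p 0, G p 1⟫ * ⟪G p 1, G p 2⟫ * ⟪G p 2, G p 0⟫ +
        ⟪G p 0, G p 2⟫ * ⟪G p 1, G p 0⟫ * ⟪G p 2, G p 1⟫ -
        ⟪G p 0, G p 2⟫ * ⟪G p 1, G p 1⟫ * ⟪G p 2, G p 0⟫ := by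
      funext p; exact Matrix.det_fin_three _
    rw [this]
    exact ((((((hentry 0 0).mul (hentry 1 1)).mul (hentry 2 2)).sub
      (((hentry 0 0).mul (hentry 1 2)).mul (hentry 2 1))).sub
      (((hentry 0 1).mul (hentry 1 0)).mul (hentry 2 2))).add
      (((hentry 0 1).mul (hentry 1 2)).mul (hentry 2 0))).add
      (((hentry 0 2).mul (hentry 1 0)).mul (hentry 2 1))
      |>.sub (((hentry 0 2).mul (hentry 1 1)).mul (hentry 2 0))
  -- positivity at t = 0
  have hF0 : ∀ y ∈ K, 0 < F (y, 0) := by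
    intro y hy
    have h0 : c y ≠ 0 := hcK y hy
    have hnv : nvec θ y = ‖c y‖⁻¹ • c y := rfl
    have horth0 : ⟪pd 0 θ y, nvec θ y⟫ = 0 := by
      rw [hnv, real_inner_smul_right, show c y = cross3 (pd 0 θ y) (pd 1 θ y) from rfl,
        inner_cross3_left]; ring
    have horth1 : ⟪pd 1 θ y, nvec θ y⟫ = 0 := by
      rw [hnv, real_inner_smul_right, show c y = cross3 (pd 0 θ y) (pd 1 θ y) from rfl,
        inner_cross3_right]; ring
    have hunit : ⟪nvec θ y, nvec θ y⟫ = 1 := by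
      rw [hnv, real_inner_smul_left, real_inner_smul_right,
        real_inner_self_eq_norm_mul_norm]
      have : ‖c y‖ ≠ 0 := norm_ne_zero_iff.mpr h0
      field_simp
    have hFval : F (y, 0) = ⟪pd 0 θ y, pd 0 θ y⟫ * ⟪pd 1 θ y, pd 1 θ y⟫ -
        ⟪pd 0 θ y, pd 1 θ y⟫ * ⟪pd 1 θ y, pd 0 θ y⟫ := by
      rw [hFdef]
      simp only [hGdef]
      rw [Matrix.det_fin_three]
      simp only [Matrix.of_apply, Matrix.cons_val_zero, Matrix.cons_val_one, Matrix.head_cons,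
        Matrix.cons_val_two, Matrix.tail_cons, zero_smul, add_zero]
      rw [hunit, horth0, horth1]
      ring
    rw [hFval, lagrange3, real_inner_self_eq_norm_sq]
    exact pow_pos (norm_pos_iff.mpr h0) 2
  -- tube lemma
  set O : Set (E2 × ℝ) := W ∩ F ⁻¹' (Set.Ioi 0) with hOdef
  have hOopen : IsOpen O := hFc.isOpen_inter_preimage hWopen isOpen_Ioi
  have hsub : K ×ˢ ({0} : Set ℝ) ⊆ O := by
    rintro ⟨y, t⟩ ⟨hy, ht⟩
    simp only [Set.mem_singleton_iff] at ht
    subst ht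
    exact ⟨⟨hKV hy, Set.mem_univ _⟩, hF0 y hy⟩
  obtain ⟨P, Q, hP, hQ, hKP, h0Q, hPQ⟩ :=
    generalized_tube_lemma hK isCompact_singleton hOopen hsub
  obtain ⟨ε, hε, hball⟩ := Metric.isOpen_iff.mp hQ 0 (h0Q rfl)
  refine ⟨ε / 2, by linarith, ?_⟩
  intro y hy x₃ hx₃
  have hxQ : x₃ ∈ Q := by
    apply hball
    rw [Metric.mem_ball, Real.dist_eq, sub_zero, abs_lt]
    rw [Set.mem_Icc] at hx₃
    constructor <;> linarith [hx₃.1, hx₃.2]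
  have hmem : (y, x₃) ∈ O := hPQ ⟨hKP hy, hxQ⟩
  have hpos : 0 < F (y, x₃) := hmem.2
  exact ⟨(gram_det_ne_zero_iff _).mp (ne_of_gt hpos), hpos⟩
end
end

section
/- Let G = (g^{ij}) be a symmetric positive definite real 3×3 matrix, and let λ ≥ 0 and μ > 0 be real numbers. Define the contravariant components of the three-dimensional elasticity tensor by A^{ijkl} := λ g^{ij} g^{kl} + μ (g^{ik} g^{jl} + g^{il} g^{jk}). Then A^{ijkl} = A^{jikl} = A^{klij} for all indices, and there exists a constant c > 0 such that for every symmetric real 3×3 matrix t = (t_{ij}): Σ_{i,j,k,l=1}^{3} A^{ijkl} t_{kl} t_{ij} ≥ c Σ_{i,j=1}^{3} t_{ij}². -/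
open scoped RealInnerProductSpace

noncomputable section

section
attribute [local instance] Matrix.frobeniusSeminormedAddCommGroup Matrix.frobeniusNormedRing

lemma aux_sq_norm (X : Matrix (Fin 3) (Fin 3) ℝ) :
    ∑ i : Fin 3, ∑ j : Fin 3, (X i j)^2 = ‖X‖^2 := by
  rw [Matrix.frobenius_norm_def, ← Real.rpow_natCast _ 2, ← Real.rpow_mul (by positivity)]
  norm_num

lemma aux_frob (B M : Matrix (Fin 3) (Fin 3) ℝ) :
    ∑ i : Fin 3, ∑ j : Fin 3, ((B*M*B) i j)^2 ≤ ‖B‖^4 * ∑ i : Fin 3, ∑ j : Fin 3, (M i j)^2 := by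
  rw [aux_sq_norm, aux_sq_norm]
  calc ‖B*M*B‖^2 ≤ (‖B‖*‖M‖*‖B‖)^2 := by
        apply pow_le_pow_left₀ (norm_nonneg _)
        exact le_trans (norm_mul_le _ _) (by gcongr; exact norm_mul_le _ _)
    _ = ‖B‖^4*‖M‖^2 := by ring

lemma aux_exists (B : Matrix (Fin 3) (Fin 3) ℝ) (hB : B ≠ 0) :
    ∃ k : ℝ, 0 < k ∧ ∀ M : Matrix (Fin 3) (Fin 3) ℝ,
      ∑ i : Fin 3, ∑ j : Fin 3, ((B*M*B) i j)^2 ≤ k * ∑ i : Fin 3, ∑ j : Fin 3, (M i j)^2 :=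
  ⟨‖B‖^4, pow_pos (norm_pos_iff.mpr hB) 4, fun M => aux_frob B M⟩

end

/-- the contravariant components
`A^{ijkl} = λ g^{ij} g^{kl} + μ (g^{ik} g^{jl} + g^{il} g^{jk})` of the three-dimensional
elasticity tensor, built from a symmetric positive definite matrix `(g^{ij})` and Lamé
constants `λ ≥ 0`, `μ > 0`, satisfy the symmetries `A^{ijkl} = A^{jikl} = A^{klij}` and are
uniformly positive definite over symmetric matrices. -/
theorem elasticity_tensor_3d_symm_posdef
    (G : Matrix (Fin 3) (Fin 3) ℝ) (hG : G.PosDef)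
    (lam mu : ℝ) (hlam : 0 ≤ lam) (hmu : 0 < mu)
    (A : Fin 3 → Fin 3 → Fin 3 → Fin 3 → ℝ)
    (hA : ∀ i j k l, A i j k l =
      lam * G i j * G k l + mu * (G i k * G j l + G i l * G j k)) :
    (∀ i j k l, A i j k l = A j i k l ∧ A i j k l = A k l i j) ∧
    ∃ c : ℝ, 0 < c ∧ ∀ t : Matrix (Fin 3) (Fin 3) ℝ, t.IsSymm →
      c * ∑ i : Fin 3, ∑ j : Fin 3, (t i j) ^ 2 ≤
        ∑ i : Fin 3, ∑ j : Fin 3, ∑ k : Fin 3, ∑ l : Fin 3,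
          A i j k l * t k l * t i j := by
  have hGs : ∀ i j, G i j = G j i := by
    intro i j
    have h := hG.isHermitian.apply i j
    simp only [star_trivial] at h
    exact h.symm
  constructor
  · intro i j k l
    constructor
    · rw [hA, hA, hGs j i, hGs j k, hGs j l]; ring
    · rw [hA, hA, hGs k l, hGs k i, hGs l j, hGs k j, hGs l i]; ring
  -- the square root of G
  · open scoped MatrixOrder in set S := CFC.sqrt G with hSdef
    open scoped MatrixOrder in have hSS : S * S = G := CFC.sqrt_mul_sqrt_self G hG.posSemidef.nonneg
    have hSsym : ∀ i j, S i j = S j i := by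
      intro i j
      open scoped MatrixOrder in have h := (Matrix.nonneg_iff_posSemidef.mp (CFC.sqrt_nonneg G)).isHermitian.apply i j
      simp only [star_trivial] at h
      rw [hSdef]
      exact h.symm
    have hdet : S.det ≠ 0 := by
      intro h
      have : G.det = 0 := by rw [← hSS, Matrix.det_mul, h, mul_zero]
      exact (ne_of_gt hG.det_pos) this
    have hinv1 : S * S⁻¹ = 1 := Matrix.mul_nonsing_inv S (by simpa using hdet)
    have hinv2 : S⁻¹ * S = 1 := Matrix.nonsing_inv_mul S (by simpa using hdet)
    have hBne : S⁻¹ ≠ 0 := by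
      intro h
      rw [h, Matrix.zero_mul] at hinv2
      exact one_ne_zero (congrFun (congrFun hinv2.symm 0) 0)
    obtain ⟨k, hkpos, hkb⟩ := aux_exists S⁻¹ hBne
    refine ⟨2 * mu / k, by positivity, ?_⟩
    intro t ht
    have ht' : ∀ i j, t i j = t j i := fun i j => congrFun (congrFun ht j) i
    set M := S * t * S with hM
    have htM : S⁻¹ * M * S⁻¹ = t := by
      rw [hM]
      calc S⁻¹ * (S * t * S) * S⁻¹ = (S⁻¹ * S) * t * (S * S⁻¹) := by
            noncomm_ring
        _ = t := by rw [hinv1, hinv2, Matrix.one_mul, Matrix.mul_one]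
    -- key algebraic identity
    have key : ∑ i : Fin 3, ∑ j : Fin 3, ∑ k : Fin 3, ∑ l : Fin 3,
        A i j k l * t k l * t i j
        = lam * (Matrix.trace (G * t))^2 + 2 * mu * Matrix.trace (G * t * (G * t)) := by
      simp only [hA, Matrix.trace, Matrix.diag, Matrix.mul_apply, Fin.sum_univ_three]
      rw [ht' 1 0, ht' 2 0, ht' 2 1, hGs 1 0, hGs 2 0, hGs 2 1]
      ring
    have h1 : G * t * (G * t) = S * (M * M * S⁻¹) := by
      rw [hM, ← hSS]
      have e : S*t*S*(S*t*S)*S⁻¹ = S*t*(S*S)*t*(S*S⁻¹) := by noncomm_ring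
      rw [e, hinv1, Matrix.mul_one]
      noncomm_ring
    have hMsymM : M.transpose = M := by
      rw [hM, Matrix.transpose_mul, Matrix.transpose_mul]
      have hST : S.transpose = S := Matrix.ext fun i j => hSsym j i
      have htT : t.transpose = t := ht
      rw [hST, htT, Matrix.mul_assoc]
    have hMsym : ∀ i j, M i j = M j i := fun i j => congrFun (congrFun hMsymM j) i
    have keyM : Matrix.trace (G * t * (G * t)) = ∑ i : Fin 3, ∑ j : Fin 3, (M i j)^2 := by
      rw [h1, Matrix.trace_mul_comm, Matrix.mul_assoc, hinv2, Matrix.mul_one]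
      simp only [Matrix.trace, Matrix.diag, Matrix.mul_apply, Fin.sum_univ_three]
      rw [hMsym 1 0, hMsym 2 0, hMsym 2 1]
      ring
    rw [key, keyM]
    have hfrob : ∑ i : Fin 3, ∑ j : Fin 3, (t i j)^2 ≤ k * ∑ i : Fin 3, ∑ j : Fin 3, (M i j)^2 := by
      calc ∑ i : Fin 3, ∑ j : Fin 3, (t i j)^2
          = ∑ i : Fin 3, ∑ j : Fin 3, ((S⁻¹ * M * S⁻¹) i j)^2 := by rw [htM]
        _ ≤ k * ∑ i : Fin 3, ∑ j : Fin 3, (M i j)^2 := hkb _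
    have h2 : 2 * mu / k * ∑ i : Fin 3, ∑ j : Fin 3, (t i j)^2
        ≤ 2 * mu * ∑ i : Fin 3, ∑ j : Fin 3, (M i j)^2 := by
      rw [div_mul_eq_mul_div, div_le_iff₀ hkpos]
      calc 2 * mu * ∑ i : Fin 3, ∑ j : Fin 3, (t i j)^2
          ≤ 2 * mu * (k * ∑ i : Fin 3, ∑ j : Fin 3, (M i j)^2) := by
            apply mul_le_mul_of_nonneg_left hfrob (by positivity)
        _ = 2 * mu * (∑ i : Fin 3, ∑ j : Fin 3, (M i j)^2) * k := by ring
    have h3 : 0 ≤ lam * (Matrix.trace (G * t))^2 := by positivity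
    linarith
end
end

section
/- Let (a^{αβ}) be a symmetric positive definite real 2×2 matrix, and let λ ≥ 0 and μ > 0 be real numbers. Define the contravariant components of the two-dimensional elasticity tensor of a shell by a^{αβστ} := (4λμ/(λ+2μ)) a^{αβ} a^{στ} + 2μ (a^{ασ} a^{βτ} + a^{ατ} a^{βσ}). Then a^{αβστ} = a^{βαστ} = a^{σταβ} for all indices, and there exists a constant c > 0 such that for every symmetric real 2×2 matrix t = (t_{αβ}): Σ_{α,β,σ,τ=1}^{2} a^{αβστ} t_{στ} t_{αβ} ≥ c Σ_{α,β=1}^{2} t_{αβ}². -/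
open scoped RealInnerProductSpace

noncomputable section

lemma psd_pair (e f g u v w : ℝ) (he : 0 ≤ e) (hg : 0 ≤ g) (hb : f^2 ≤ e*g)
    (hu : 0 ≤ u) (hw : 0 ≤ w) (hs : v^2 ≤ u*w) : 0 ≤ e*u + 2*f*v + g*w := by
  have h4 : (f*v)^2 ≤ (e*u)*(g*w) := by
    calc (f*v)^2 = f^2 * v^2 := by ring
    _ ≤ (e*g)*(u*w) := mul_le_mul hb hs (sq_nonneg v) (le_trans (sq_nonneg f) hb)
    _ = (e*u)*(g*w) := by ring
  nlinarith [sq_nonneg (e*u - g*w), mul_nonneg he hu, mul_nonneg hg hw,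
    sq_nonneg (e*u + g*w + 2*(f*v))]

lemma key_ineq (p q r x y z : ℝ) (hp : 0 < p) (hr : 0 < r) (hd : 0 < p*r - q^2) :
    (p*r-q^2)^2 * (x^2 + 2*y^2 + z^2) ≤
    (p+r)^2 * ((p*x+q*y)^2 + 2*(p*y+q*z)*(q*x+r*y) + (q*y+r*z)^2) := by
  have hs : 0 < p + r := by linarith
  set m : ℝ := (p*r - q^2)/(p+r) with hm
  have hm0 : 0 < m := div_pos hd hs
  have he : 0 ≤ p - m := by
    have h : (p - m) * (p+r) = p^2 + q^2 := by rw [hm]; field_simp; ring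
    nlinarith [sq_nonneg p, sq_nonneg q]
  have hg : 0 ≤ r - m := by
    have h : (r - m) * (p+r) = r^2 + q^2 := by rw [hm]; field_simp; ring
    nlinarith [sq_nonneg r, sq_nonneg q]
  have hdet : q^2 ≤ (p - m) * (r - m) := by
    have h : (p - m) * (r - m) - q^2 = m^2 := by rw [hm]; field_simp; ring
    nlinarith [sq_nonneg m]
  have hS00 : 0 ≤ p*x^2 + 2*q*x*y + r*y^2 := by
    nlinarith [sq_nonneg (p*x+q*y), mul_nonneg hd.le (sq_nonneg y), hp, sq_nonneg x]
  have hS11 : 0 ≤ p*y^2 + 2*q*y*z + r*z^2 := by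
    nlinarith [sq_nonneg (p*y+q*z), mul_nonneg hd.le (sq_nonneg z), hp, sq_nonneg y]
  have hSdet : (p*x*y + q*x*z + q*y^2 + r*y*z)^2 ≤
      (p*x^2 + 2*q*x*y + r*y^2) * (p*y^2 + 2*q*y*z + r*z^2) := by
    nlinarith [mul_nonneg hd.le (sq_nonneg (x*z - y^2))]
  have ht2 : (y*(x+z))^2 ≤ (x^2+y^2)*(y^2+z^2) := by nlinarith [sq_nonneg (x*z - y^2)]
  have h1 : 0 ≤ (p-m)*(p*x^2 + 2*q*x*y + r*y^2) + 2*q*(p*x*y + q*x*z + q*y^2 + r*y*z)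
      + (r-m)*(p*y^2 + 2*q*y*z + r*z^2) :=
    psd_pair _ _ _ _ _ _ he hg hdet hS00 hS11 hSdet
  have h2 : 0 ≤ (p-m)*(x^2+y^2) + 2*q*(y*(x+z)) + (r-m)*(y^2+z^2) :=
    psd_pair _ _ _ _ _ _ he hg hdet (by positivity) (by positivity) ht2
  have e1 : (p*x+q*y)^2 + 2*(p*y+q*z)*(q*x+r*y) + (q*y+r*z)^2
      = m*((p*x^2 + 2*q*x*y + r*y^2) + (p*y^2 + 2*q*y*z + r*z^2))
        + ((p-m)*(p*x^2 + 2*q*x*y + r*y^2) + 2*q*(p*x*y + q*x*z + q*y^2 + r*y*z)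
          + (r-m)*(p*y^2 + 2*q*y*z + r*z^2)) := by ring
  have e2 : (p*x^2 + 2*q*x*y + r*y^2) + (p*y^2 + 2*q*y*z + r*z^2)
      = m*(x^2 + 2*y^2 + z^2) + ((p-m)*(x^2+y^2) + 2*q*(y*(x+z)) + (r-m)*(y^2+z^2)) := by ring
  have hT : m^2 * (x^2 + 2*y^2 + z^2) ≤
      (p*x+q*y)^2 + 2*(p*y+q*z)*(q*x+r*y) + (q*y+r*z)^2 := by
    rw [e1, e2]
    nlinarith [mul_nonneg hm0.le h2]
  have hms : m * (p+r) = p*r - q^2 := by rw [hm]; field_simp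
  calc (p*r-q^2)^2 * (x^2 + 2*y^2 + z^2) = (p+r)^2 * (m^2 * (x^2+2*y^2+z^2)) := by
        rw [← hms]; ring
    _ ≤ (p+r)^2 * _ := mul_le_mul_of_nonneg_left hT (by positivity)


/-- the contravariant components
`a^{αβστ} = (4λμ/(λ+2μ)) a^{αβ} a^{στ} + 2μ (a^{ασ} a^{βτ} + a^{ατ} a^{βσ})` of the
two-dimensional elasticity tensor of a shell, built from a symmetric positive definite
matrix `(a^{αβ})` and Lamé constants `λ ≥ 0`, `μ > 0`, satisfy the symmetries
`a^{αβστ} = a^{βαστ} = a^{σταβ}` and are uniformly positive definite over symmetric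
matrices. -/
theorem elasticity_tensor_2d_symm_posdef
    (a : Matrix (Fin 2) (Fin 2) ℝ) (ha : a.PosDef)
    (lam mu : ℝ) (hlam : 0 ≤ lam) (hmu : 0 < mu)
    (A : Fin 2 → Fin 2 → Fin 2 → Fin 2 → ℝ)
    (hA : ∀ α β σ τ, A α β σ τ =
      (4 * lam * mu / (lam + 2 * mu)) * a α β * a σ τ +
        2 * mu * (a α σ * a β τ + a α τ * a β σ)) :
    (∀ α β σ τ, A α β σ τ = A β α σ τ ∧ A α β σ τ = A σ τ α β) ∧
    ∃ c : ℝ, 0 < c ∧ ∀ t : Matrix (Fin 2) (Fin 2) ℝ, t.IsSymm →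
      c * ∑ α : Fin 2, ∑ β : Fin 2, (t α β) ^ 2 ≤
        ∑ α : Fin 2, ∑ β : Fin 2, ∑ σ : Fin 2, ∑ τ : Fin 2,
          A α β σ τ * t σ τ * t α β := by
  have hsym : ∀ i j, a j i = a i j := by
    intro i j
    have := congrFun (congrFun ha.1 i) j
    simpa [Matrix.conjTranspose_apply] using this
  constructor
  · intro α β σ τ
    constructor
    · rw [hA, hA, hsym α β]; ring
    · rw [hA, hA, hsym α σ, hsym β τ, hsym β σ, hsym α τ]; ring
  · have hp : 0 < a 0 0 := by
      exact ha.diag_pos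
    have hr : 0 < a 1 1 := by
      exact ha.diag_pos
    have hd : 0 < a 0 0 * a 1 1 - a 0 1 ^ 2 := by
      have h := ha.det_pos
      rw [Matrix.det_fin_two, hsym 0 1] at h
      nlinarith [h]
    have hs : 0 < a 0 0 + a 1 1 := by linarith
    refine ⟨4*mu*(a 0 0 * a 1 1 - a 0 1 ^ 2)^2/(a 0 0 + a 1 1)^2, by positivity, ?_⟩
    intro t ht
    have hty : t 1 0 = t 0 1 := by
      have := congrFun (congrFun ht 0) 1
      simpa [Matrix.transpose_apply] using this
    have hk : 0 ≤ 4 * lam * mu / (lam + 2 * mu) := by positivity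
    have hkey := key_ineq (a 0 0) (a 0 1) (a 1 1) (t 0 0) (t 0 1) (t 1 1) hp hr hd
    have h5 : 4*mu*(a 0 0 * a 1 1 - a 0 1 ^ 2)^2/(a 0 0 + a 1 1)^2 *
          (t 0 0 ^ 2 + 2 * t 0 1 ^ 2 + t 1 1 ^ 2) ≤
        4*mu*((a 0 0 * t 0 0 + a 0 1 * t 0 1)^2
          + 2*(a 0 0 * t 0 1 + a 0 1 * t 1 1)*(a 0 1 * t 0 0 + a 1 1 * t 0 1)
          + (a 0 1 * t 0 1 + a 1 1 * t 1 1)^2) := by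
      rw [div_mul_eq_mul_div, div_le_iff₀ (by positivity)]
      nlinarith [mul_le_mul_of_nonneg_left hkey (by positivity : (0:ℝ) ≤ 4*mu)]
    simp only [Fin.sum_univ_two, hA]
    rw [hsym 0 1, hty]
    linarith [h5, mul_nonneg hk
      (sq_nonneg (a 0 0 * t 0 0 + 2 * a 0 1 * t 0 1 + a 1 1 * t 1 1))]
end
end
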